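/- arXiv:0912.0569 — 2 statements merged into one kernel-verified Lean document; each statement's English description precedes it below -/
import Mathlib

section
/- Let X be a nilpotent operator on ℂ^N with X^n = 0 and Jordan type ν, and let λ be the conjugate partition of ν. If there exists an n-step flag 0 = V_0 ⊆ V_1 ⊆ ⋯ ⊆ V_n = ℂ^N with dim(V_i/V_{i−1}) = μ_i and X V_i ⊆ V_{i−1} for all i, then for every k, μ_1 + ⋯ + μ_k ≤ λ_1 + ⋯ + λ_k. -/
/-- Let `X` be a nilpotent operator on `ℂᴺ` with `Xⁿ = 0`, and let `λ` be the
conjugate of its Jordan type, so that `λ₁ + ⋯ + λ_k = dim ker Xᵏ` (here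
`lam k = λ_{k+1} = dim ker X^{k+1} − dim ker X^k`).  If there is an `n`-step flag
`0 = V₀ ⊆ ⋯ ⊆ Vₙ = ℂᴺ` with `dim(Vᵢ/Vᵢ₋₁) = μᵢ` and `X Vᵢ ⊆ Vᵢ₋₁`, then for every
`k`, `μ₁ + ⋯ + μ_k ≤ λ₁ + ⋯ + λ_k`. -/
theorem springer_fibre_weight_dominance (n N : ℕ)
    (f : Module.End ℂ (Fin N → ℂ)) (hnil : f ^ n = 0)
    (lam : ℕ → ℕ)
    (hlam : ∀ k : ℕ, Module.finrank ℂ (LinearMap.ker (f ^ (k + 1))) =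
      Module.finrank ℂ (LinearMap.ker (f ^ k)) + lam k)
    (V : Fin (n + 1) → Submodule ℂ (Fin N → ℂ))
    (hV0 : V 0 = ⊥) (hVtop : V (Fin.last n) = ⊤)
    (hchain : ∀ i : Fin n, V i.castSucc ≤ V i.succ)
    (μ : Fin n → ℕ)
    (hμ : ∀ i : Fin n, Module.finrank ℂ (V i.succ) =
      Module.finrank ℂ (V i.castSucc) + μ i)
    (hX : ∀ i : Fin n, Submodule.map f (V i.succ) ≤ V i.castSucc) :
    ∀ k : ℕ, k ≤ n →
      ∑ i ∈ Finset.univ.filter (fun i : Fin n => (i : ℕ) < k), μ i ≤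
        ∑ i ∈ Finset.range k, lam i := by
  -- V_k is contained in ker (f^k)
  have hker : ∀ k : ℕ, ∀ hk : k ≤ n,
      V ⟨k, Nat.lt_succ_of_le hk⟩ ≤ LinearMap.ker (f ^ k) := by
    intro k
    induction k with
    | zero =>
      intro hk
      have : (⟨0, Nat.lt_succ_of_le hk⟩ : Fin (n + 1)) = 0 := rfl
      rw [this, hV0]
      exact bot_le
    | succ k ih =>
      intro hk x hx
      have hkn : k < n := Nat.lt_of_succ_le hk
      have hfx : f x ∈ V (⟨k, hkn⟩ : Fin n).castSucc :=
        hX ⟨k, hkn⟩ (Submodule.mem_map_of_mem (p := V (⟨k, hkn⟩ : Fin n).succ) hx)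
      have hfk : f x ∈ LinearMap.ker (f ^ k) := ih (le_of_lt hkn) hfx
      have : (f ^ k) (f x) = 0 := hfk
      simpa [LinearMap.mem_ker, pow_succ] using this
  -- dim ker f^k = ∑ lam
  have hdimker : ∀ k : ℕ,
      Module.finrank ℂ (LinearMap.ker (f ^ k)) = ∑ i ∈ Finset.range k, lam i := by
    intro k
    induction k with
    | zero => simp [Module.End.one_eq_id]
    | succ k ih => rw [hlam k, ih, Finset.sum_range_succ]
  -- dim V_k = ∑ μ
  have hdimV : ∀ k : ℕ, ∀ hk : k ≤ n,
      Module.finrank ℂ (V ⟨k, Nat.lt_succ_of_le hk⟩) =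
        ∑ i ∈ Finset.univ.filter (fun i : Fin n => (i : ℕ) < k), μ i := by
    intro k
    induction k with
    | zero =>
      intro hk
      have h0 : (⟨0, Nat.lt_succ_of_le hk⟩ : Fin (n + 1)) = 0 := rfl
      rw [h0, hV0]
      simp
    | succ k ih =>
      intro hk
      have hkn : k < n := Nat.lt_of_succ_le hk
      have hfilter : Finset.univ.filter (fun i : Fin n => (i : ℕ) < k + 1) =
          insert ⟨k, hkn⟩ (Finset.univ.filter (fun i : Fin n => (i : ℕ) < k)) := by
        ext i
        simp only [Finset.mem_filter, Finset.mem_univ, true_and, Finset.mem_insert,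
          Fin.ext_iff]
        omega
      rw [hfilter, Finset.sum_insert (by simp)]
      have := hμ ⟨k, hkn⟩
      have hcs : (⟨k, hkn⟩ : Fin n).castSucc = ⟨k, Nat.lt_succ_of_le (le_of_lt hkn)⟩ := rfl
      have hsucc : (⟨k, hkn⟩ : Fin n).succ = ⟨k + 1, Nat.lt_succ_of_le hk⟩ := rfl
      rw [hsucc, hcs] at this
      rw [this, ih (le_of_lt hkn)]
      omega
  intro k hk
  rw [← hdimV k hk, ← hdimker k]
  exact Submodule.finrank_mono (hker k hk)
end

section
/- Let X be a nilpotent operator on ℂ^N with conjugate Jordan type λ (so λ_k = dim ker X^k − dim ker X^{k−1}). Then there is a unique n-step flag 0 = V_0 ⊆ ⋯ ⊆ V_n = ℂ^N with X V_i ⊆ V_{i−1} and dim(V_i/V_{i−1}) = λ_i for all i, namely V_i = ker(X^i). -/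
/-- Let `X` be a nilpotent operator on `ℂᴺ` with `Xⁿ = 0` and conjugate Jordan type
`λ` (so `λ_k = dim ker Xᵏ − dim ker X^{k−1}`; here `lam i = λ_{i+1}`).  Then there
is a unique `n`-step flag `0 = V₀ ⊆ ⋯ ⊆ Vₙ = ℂᴺ` with `X Vᵢ ⊆ Vᵢ₋₁` and
`dim(Vᵢ/Vᵢ₋₁) = λᵢ`, namely `Vᵢ = ker(Xⁱ)`. -/
theorem springer_fibre_highest_weight_point (n N : ℕ)
    (f : Module.End ℂ (Fin N → ℂ)) (hnil : f ^ n = 0)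
    (lam : Fin n → ℕ)
    (hlam : ∀ i : Fin n, Module.finrank ℂ (LinearMap.ker (f ^ ((i : ℕ) + 1))) =
      Module.finrank ℂ (LinearMap.ker (f ^ (i : ℕ))) + lam i) :
    ∀ V : Fin (n + 1) → Submodule ℂ (Fin N → ℂ),
      (V 0 = ⊥ ∧ V (Fin.last n) = ⊤ ∧
        (∀ i : Fin n, V i.castSucc ≤ V i.succ) ∧
        (∀ i : Fin n, Submodule.map f (V i.succ) ≤ V i.castSucc) ∧
        (∀ i : Fin n, Module.finrank ℂ (V i.succ) =
          Module.finrank ℂ (V i.castSucc) + lam i)) ↔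
      V = fun i : Fin (n + 1) => LinearMap.ker (f ^ (i : ℕ)) := by
  intro V
  constructor
  · rintro ⟨h0, -, -, hmap, hdim⟩
    have key : ∀ i : Fin (n + 1),
        V i ≤ LinearMap.ker (f ^ (i : ℕ)) ∧
        Module.finrank ℂ (V i) =
          Module.finrank ℂ (LinearMap.ker (f ^ (i : ℕ))) := by
      intro i
      induction i using Fin.induction with
      | zero =>
        constructor
        · rw [h0]; exact bot_le
        · rw [h0]
          simp only [Fin.val_zero]
          exact congrArg (fun W : Submodule ℂ (Fin N → ℂ) => Module.finrank ℂ W)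
            (show (⊥ : Submodule ℂ (Fin N → ℂ)) = LinearMap.ker (f ^ 0) by ext x; simp)
      | succ i ih =>
        obtain ⟨hle, hfr⟩ := ih
        constructor
        · intro x hx
          have hfx : f x ∈ V i.castSucc := hmap i ⟨x, hx, rfl⟩
          have : f x ∈ LinearMap.ker (f ^ (i : ℕ)) := hle hfx
          simp only [LinearMap.mem_ker] at this ⊢
          have : (f ^ (i : ℕ) * f) x = 0 := this
          simpa [pow_succ] using this
        · simp only [Fin.coe_castSucc] at hfr
          rw [Fin.val_succ, hdim i, hlam i, hfr]
    funext i
    obtain ⟨hle, hfr⟩ := key i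
    exact Submodule.eq_of_le_of_finrank_eq hle hfr
  · rintro rfl
    refine ⟨?_, ?_, ?_, ?_, ?_⟩
    · show LinearMap.ker (f ^ ((0 : Fin (n+1)) : ℕ)) = ⊥
      rw [show ((0 : Fin (n+1)) : ℕ) = 0 from rfl, pow_zero]
      ext x; simp
    · simp only [Fin.val_last]
      rw [hnil]
      exact LinearMap.ker_zero
    · intro i
      intro x hx
      simp only [LinearMap.mem_ker, Fin.coe_castSucc, Fin.val_succ] at hx ⊢
      rw [pow_succ', Module.End.mul_apply, hx, map_zero]
    · intro i
      rintro x ⟨y, hy, rfl⟩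
      simp only [LinearMap.mem_ker, Fin.coe_castSucc, Fin.val_succ] at hy ⊢
      have : (f ^ ((i : ℕ) + 1)) y = 0 := hy
      rw [pow_succ] at this
      exact this
    · intro i
      simp only [Fin.val_succ, Fin.coe_castSucc]
      exact hlam i
end
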